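/- For every integer L ≥ 0, the integer M_L = 11·(10^{L+2} − 1), whose decimal digit string is 10(9)_L89 (a 1, a 0, then L nines, then 8, 9), satisfies rev(M_L) = 9·M_L; consequently M_L and 10·M_L form a 2-cycle of the iterative digital reversal map. -/

import Mathlib

/-- Digital reversal of a natural number (in base 10). -/
def rev (D : ℕ) : ℕ := Nat.ofDigits 10 ((Nat.digits 10 D).reverse)

/-- The iterative digital reversal map: `D ↦ D - rev D` if `rev D < D`,
and `D ↦ D + rev D` if `rev D ≥ D`. -/
def IDR (D : ℕ) : ℕ := if rev D < D then D - rev D else D + rev D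

lemma ofDigits_rep9 (L : ℕ) : Nat.ofDigits 10 (List.replicate L 9) = 10 ^ L - 1 := by
  induction L with
  | zero => simp
  | succ n ih =>
    rw [List.replicate_succ, Nat.ofDigits_cons, ih]
    have : 1 ≤ 10 ^ n := Nat.one_le_pow _ _ (by norm_num)
    rw [pow_succ]
    omega

lemma digitsM (L : ℕ) :
    Nat.digits 10 (11 * (10 ^ (L + 2) - 1)) = 9 :: 8 :: (List.replicate L 9 ++ [0, 1]) := by
  have hval : Nat.ofDigits 10 (9 :: 8 :: (List.replicate L 9 ++ [0, 1]))
      = 11 * (10 ^ (L + 2) - 1) := by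
    rw [Nat.ofDigits_cons, Nat.ofDigits_cons, Nat.ofDigits_append, ofDigits_rep9]
    simp [Nat.ofDigits, List.length_replicate]
    have h1 : 1 ≤ 10 ^ L := Nat.one_le_pow _ _ (by norm_num)
    have h2 : (10:ℕ) ^ (L + 2) = 10 ^ L * 100 := by ring
    ring_nf
    omega
  rw [← hval]
  apply Nat.digits_ofDigits 10 (by norm_num)
  · intro l hl
    simp at hl
    rcases hl with h | h | h | h | h <;> omega
  · intro h
    rw [List.getLast_cons, List.getLast_cons, List.getLast_append]
    · simp
    all_goals simp

lemma revM (L : ℕ) : rev (11 * (10 ^ (L + 2) - 1)) = 9 * (11 * (10 ^ (L + 2) - 1)) := by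
  unfold rev
  rw [digitsM]
  simp only [List.reverse_cons, List.reverse_append, List.reverse_replicate]
  simp [Nat.ofDigits_append, Nat.ofDigits_cons, ofDigits_rep9, Nat.ofDigits,
    List.length_replicate]
  have h1 : 1 ≤ 10 ^ L := Nat.one_le_pow _ _ (by norm_num)
  have h2 : (10:ℕ) ^ (L + 2) = 10 ^ L * 100 := by ring
  ring_nf
  omega

theorem stmt11 (L : ℕ) :
    rev (11 * (10 ^ (L + 2) - 1)) = 9 * (11 * (10 ^ (L + 2) - 1)) ∧
    IDR (11 * (10 ^ (L + 2) - 1)) = 10 * (11 * (10 ^ (L + 2) - 1)) ∧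
    IDR (10 * (11 * (10 ^ (L + 2) - 1))) = 11 * (10 ^ (L + 2) - 1) := by
  set M := 11 * (10 ^ (L + 2) - 1) with hM
  have hMpos : 0 < M := by
    have : 100 ≤ 10 ^ (L + 2) := by
      calc (100:ℕ) = 10 ^ 2 := by norm_num
      _ ≤ 10 ^ (L + 2) := Nat.pow_le_pow_right (by norm_num) (by omega)
    omega
  have h1 : rev M = 9 * M := revM L
  have h2 : rev (10 * M) = 9 * M := by
    unfold rev
    rw [Nat.digits_def' (by norm_num : (1:ℕ) < 10) (by positivity),
      Nat.mul_mod_right, Nat.mul_div_cancel_left _ (by norm_num)]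
    simp only [List.reverse_cons]
    rw [Nat.ofDigits_append]
    simpa [Nat.ofDigits, rev] using h1
  refine ⟨h1, ?_, ?_⟩
  · unfold IDR
    rw [h1]
    rw [if_neg (by omega)]
    ring
  · unfold IDR
    rw [h2, if_pos (by omega)]
    omega
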